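/- For every integer n ≥ 2 there exists a constant C > 0 such that for all δ ∈ (0, 1/2): ∫_{[0,1]^n} Π_{i=1}^{n−1} 1/(x_i + x_{i+1} + δ) dx_1 ⋯ dx_n ≤ C. -/

import Mathlib

open MeasureTheory
open scoped ENNReal

lemma my_lintegral_prod (m : ℕ) (f : ℝ → ℝ≥0∞) (hf : Measurable f) :
    ∫⁻ x : Fin m → ℝ, ∏ j, f (x j) = (∫⁻ t, f t) ^ m := by
  induction m with
  | zero =>
      simp only [Finset.univ_eq_empty, Finset.prod_empty, lintegral_const, one_mul, pow_zero]
      rw [volume_pi, Measure.pi_univ]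
      simp
  | succ m ih =>
      have hmeas : Measurable fun x : Fin (m+1) → ℝ => ∏ j, f (x j) :=
        Finset.measurable_prod _ fun j _ => hf.comp (measurable_pi_apply j)
      have key := (measurePreserving_piFinSuccAbove
        (fun _ : Fin (m+1) => (volume : Measure ℝ)) 0).symm
      rw [volume_pi, ← key.lintegral_comp hmeas]
      simp_rw [MeasurableEquiv.piFinSuccAbove_symm_apply, Fin.insertNthEquiv_zero, Fin.consEquiv_apply,
        Fin.prod_univ_succ, Fin.cons_zero, Fin.cons_succ]
      rw [lintegral_prod_mul (g := fun y : Fin m → ℝ => ∏ j, f (y j)) hf.aemeasurable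
        (Finset.measurable_prod _ fun j _ => hf.comp (measurable_pi_apply j)).aemeasurable]
      rw [← volume_pi, ih, pow_succ']

lemma chain_pointwise (n : ℕ) (δ : ℝ) (hδ : 0 ≤ δ) (x : Fin (n+2) → ℝ)
    (hx : ∀ j, 0 < x j) :
    ∏ j, x j ^ (((n:ℝ)+1)/((n:ℝ)+2)) ≤ ∏ i : Fin (n+1), (x i.castSucc + x i.succ + δ) := by
  have hn2 : (0:ℝ) < (n:ℝ)+2 := by positivity
  set α : Fin (n+2) → ℝ := fun j => if (j : ℕ) = n+1 then 0 else ((n:ℝ)+1 - (j:ℕ))/((n:ℝ)+2)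
    with hα
  set β : Fin (n+2) → ℝ := fun j => if (j : ℕ) = 0 then 0 else ((j:ℕ):ℝ)/((n:ℝ)+2) with hβ
  have hsum : ∀ j : Fin (n+2), α j + β j = ((n:ℝ)+1)/((n:ℝ)+2) := by
    intro j
    simp only [hα, hβ]
    by_cases h1 : (j:ℕ) = n+1
    · have h0 : (j:ℕ) ≠ 0 := by omega
      simp only [h1, if_true, h0, if_false]
      push_cast
      ring
    · by_cases h0 : (j:ℕ) = 0
      · simp only [h1, if_false, h0, if_true]
        push_cast
        ring
      · simp only [h1, if_false, h0, if_false]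
        field_simp
        ring
  have key : ∀ j, x j ^ (((n:ℝ)+1)/((n:ℝ)+2)) = x j ^ α j * x j ^ β j := fun j => by
    rw [← Real.rpow_add (hx j), hsum j]
  calc ∏ j, x j ^ (((n:ℝ)+1)/((n:ℝ)+2))
      = (∏ j, x j ^ α j) * (∏ j, x j ^ β j) := by
        simp_rw [key]; rw [Finset.prod_mul_distrib]
    _ = (∏ i : Fin (n+1), x i.castSucc ^ α i.castSucc)
          * (∏ i : Fin (n+1), x i.succ ^ β i.succ) := by
        rw [Fin.prod_univ_castSucc (f := fun j => x j ^ α j),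
            Fin.prod_univ_succ (f := fun j => x j ^ β j)]
        have h1 : α (Fin.last (n+1)) = 0 := by simp [hα]
        have h2 : β 0 = 0 := by simp [hβ]
        rw [h1, h2, Real.rpow_zero, Real.rpow_zero, mul_one, one_mul]
    _ = ∏ i : Fin (n+1), (x i.castSucc ^ α i.castSucc * x i.succ ^ β i.succ) :=
        (Finset.prod_mul_distrib).symm
    _ ≤ ∏ i : Fin (n+1), (x i.castSucc + x i.succ + δ) := by
        apply Finset.prod_le_prod
        · intro i _
          exact mul_nonneg (Real.rpow_nonneg (hx _).le _) (Real.rpow_nonneg (hx _).le _)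
        · intro i _
          have hαi : α i.castSucc = ((n:ℝ)+1 - (i:ℕ))/((n:ℝ)+2) := by
            have h := i.isLt
            have hne : (i:ℕ) ≠ n+1 := by omega
            simp [hα, Fin.coe_castSucc, hne]
          have hβi : β i.succ = (((i:ℕ):ℝ)+1)/((n:ℝ)+2) := by
            have : (i.succ : ℕ) ≠ 0 := by simp [Fin.val_succ]
            simp [hβ, this, Fin.val_succ]
          have hile : ((i:ℕ):ℝ) ≤ (n:ℝ) := by exact_mod_cast Nat.lt_succ_iff.mp i.isLt
          have hipos : (0:ℝ) ≤ ((i:ℕ):ℝ) := by positivity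
          have hw1 : 0 ≤ α i.castSucc := by rw [hαi]; apply div_nonneg; linarith; linarith
          have hw2 : 0 ≤ β i.succ := by rw [hβi]; positivity
          have hws : α i.castSucc + β i.succ = 1 := by
            rw [hαi, hβi]; field_simp; ring
          have hg := Real.geom_mean_le_arith_mean2_weighted hw1 hw2
            (hx i.castSucc).le (hx i.succ).le hws
          have h1' : α i.castSucc ≤ 1 := by linarith
          have h2' : β i.succ ≤ 1 := by linarith
          have e1 : (1 - α i.castSucc) * x i.castSucc ≥ 0 :=
            mul_nonneg (by linarith) (hx _).le
          have e2 : (1 - β i.succ) * x i.succ ≥ 0 :=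
            mul_nonneg (by linarith) (hx _).le
          nlinarith [hg]

lemma coord_zero_null (m : ℕ) (j : Fin m) :
    (volume : Measure (Fin m → ℝ)) {x | x j = 0} = 0 := by
  have hset : {x : Fin m → ℝ | x j = 0}
      = Set.pi Set.univ (fun k => if k = j then ({0} : Set ℝ) else Set.univ) := by
    ext x
    simp only [Set.mem_setOf_eq, Set.mem_pi, Set.mem_univ, forall_true_left]
    constructor
    · intro h k
      by_cases hk : k = j
      · subst hk; simp [h]
      · simp [hk]
    · intro h
      have := h j
      simpa using this
  rw [hset, volume_pi, Measure.pi_pi]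
  refine Finset.prod_eq_zero (Finset.mem_univ j) ?_
  simp

lemma single_lintegral (n : ℕ) :
    ∫⁻ t, (Set.Icc (0:ℝ) 1).indicator
        (fun t => ENNReal.ofReal ((t ^ (((n:ℝ)+1)/((n:ℝ)+2)))⁻¹)) t
      ≤ ENNReal.ofReal ((n:ℝ)+2) := by
  set e : ℝ := ((n:ℝ)+1)/((n:ℝ)+2) with he
  have hn2 : (0:ℝ) < (n:ℝ)+2 := by positivity
  have hepos : 0 < e := by rw [he]; positivity
  have helt : e < 1 := by
    rw [he, div_lt_one hn2]; linarith
  rw [lintegral_indicator measurableSet_Icc]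
  have hIoc : (volume : Measure ℝ).restrict (Set.Icc (0:ℝ) 1)
      = (volume : Measure ℝ).restrict (Set.Ioc (0:ℝ) 1) :=
    (Measure.restrict_congr_set Ioc_ae_eq_Icc).symm
  rw [hIoc]
  have hcong : ∀ t ∈ Set.Ioc (0:ℝ) 1,
      ENNReal.ofReal ((t ^ e)⁻¹) = ENNReal.ofReal (t ^ (-e)) := by
    intro t ht
    rw [Real.rpow_neg ht.1.le]
  rw [setLIntegral_congr_fun measurableSet_Ioc hcong]
  have hint : IntegrableOn (fun t : ℝ => t ^ (-e)) (Set.Ioc (0:ℝ) 1) := by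
    have := intervalIntegral.intervalIntegrable_rpow' (a := 0) (b := 1) (r := -e)
      (by linarith)
    rwa [intervalIntegrable_iff, Set.uIoc_of_le (by norm_num : (0:ℝ) ≤ 1)] at this
  rw [← ofReal_integral_eq_lintegral_ofReal hint]
  · have hval : ∫ t in Set.Ioc (0:ℝ) 1, t ^ (-e) = (1 : ℝ) / (-e + 1) := by
      rw [← intervalIntegral.integral_of_le (by norm_num : (0:ℝ) ≤ 1)]
      rw [integral_rpow (Or.inl (by linarith : (-1:ℝ) < -e))]
      rw [Real.one_rpow, Real.zero_rpow (by linarith : -e + 1 ≠ 0)]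
      ring
    rw [hval]
    apply ENNReal.ofReal_le_ofReal
    have : -e + 1 = 1/((n:ℝ)+2) := by rw [he]; field_simp; ring
    rw [this]
    rw [one_div_one_div]
  · filter_upwards [ae_restrict_mem measurableSet_Ioc] with t ht
    exact Real.rpow_nonneg ht.1.le _

/-- For every integer `n ≥ 2` (here `n + 2` with `n : ℕ`) there is a constant
`C > 0` such that for all `δ ∈ (0, 1/2)`,
`∫_{[0,1]^n} ∏_{i=1}^{n-1} 1/(x_i + x_{i+1} + δ) dx ≤ C`. -/
theorem chain_integral_bounded (n : ℕ) :
    ∃ C : ℝ, 0 < C ∧ ∀ δ : ℝ, δ ∈ Set.Ioo (0 : ℝ) (1/2) →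
      ∫⁻ x in Set.univ.pi (fun _ : Fin (n + 2) => Set.Icc (0 : ℝ) 1),
          ENNReal.ofReal (∏ i : Fin (n + 1), (x i.castSucc + x i.succ + δ)⁻¹)
        ≤ ENNReal.ofReal C := by
  refine ⟨((n:ℝ)+2)^(n+2), by positivity, fun δ hδ => ?_⟩
  set f₀ : ℝ → ℝ≥0∞ :=
    (Set.Icc (0:ℝ) 1).indicator
      (fun t => ENNReal.ofReal ((t ^ (((n:ℝ)+1)/((n:ℝ)+2)))⁻¹)) with hf₀
  have hmf : Measurable f₀ := by
    apply Measurable.indicator _ measurableSet_Icc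
    fun_prop
  have cube_meas : MeasurableSet (Set.univ.pi fun _ : Fin (n+2) => Set.Icc (0:ℝ) 1) :=
    MeasurableSet.univ_pi fun _ => measurableSet_Icc
  have hae : ∀ᵐ x ∂((volume : Measure (Fin (n+2) → ℝ)).restrict
      (Set.univ.pi fun _ : Fin (n+2) => Set.Icc (0:ℝ) 1)),
      ENNReal.ofReal (∏ i : Fin (n+1), (x i.castSucc + x i.succ + δ)⁻¹)
        ≤ ∏ j, f₀ (x j) := by
    have h0 : ∀ᵐ x ∂((volume : Measure (Fin (n+2) → ℝ)).restrict
        (Set.univ.pi fun _ : Fin (n+2) => Set.Icc (0:ℝ) 1)), ∀ j, x j ≠ 0 := by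
      rw [ae_all_iff]
      intro j
      refine ae_restrict_of_ae ?_
      rw [ae_iff]
      simpa using coord_zero_null (n+2) j
    filter_upwards [h0, ae_restrict_mem cube_meas] with x hx0 hxc
    have hxm : ∀ j, x j ∈ Set.Icc (0:ℝ) 1 := by
      intro j; exact hxc j (Set.mem_univ j)
    have hxpos : ∀ j, 0 < x j := fun j => lt_of_le_of_ne (hxm j).1 (Ne.symm (hx0 j))
    have hrhs : ∏ j, f₀ (x j)
        = ENNReal.ofReal ((∏ j, x j ^ (((n:ℝ)+1)/((n:ℝ)+2)))⁻¹) := by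
      have : ∀ j : Fin (n+2), f₀ (x j)
          = ENNReal.ofReal ((x j ^ (((n:ℝ)+1)/((n:ℝ)+2)))⁻¹) := by
        intro j; rw [hf₀, Set.indicator_of_mem (hxm j)]
      simp_rw [this]
      rw [← ENNReal.ofReal_prod_of_nonneg
          (fun j _ => inv_nonneg.mpr (Real.rpow_nonneg (hxm j).1 _)),
        Finset.prod_inv_distrib]
    rw [hrhs]
    apply ENNReal.ofReal_le_ofReal
    have hprodpos : 0 < ∏ j, x j ^ (((n:ℝ)+1)/((n:ℝ)+2)) :=
      Finset.prod_pos fun j _ => Real.rpow_pos_of_pos (hxpos j) _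
    calc ∏ i : Fin (n+1), (x i.castSucc + x i.succ + δ)⁻¹
        = (∏ i : Fin (n+1), (x i.castSucc + x i.succ + δ))⁻¹ :=
          Finset.prod_inv_distrib _
      _ ≤ (∏ j, x j ^ (((n:ℝ)+1)/((n:ℝ)+2)))⁻¹ :=
          inv_anti₀ hprodpos (chain_pointwise n δ hδ.1.le x hxpos)
  calc ∫⁻ x in Set.univ.pi (fun _ : Fin (n + 2) => Set.Icc (0 : ℝ) 1),
          ENNReal.ofReal (∏ i : Fin (n + 1), (x i.castSucc + x i.succ + δ)⁻¹)
      ≤ ∫⁻ x in Set.univ.pi (fun _ : Fin (n + 2) => Set.Icc (0 : ℝ) 1),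
          ∏ j, f₀ (x j) := lintegral_mono_ae hae
    _ ≤ ∫⁻ x : Fin (n+2) → ℝ, ∏ j, f₀ (x j) := setLIntegral_le_lintegral _ _
    _ = (∫⁻ t, f₀ t) ^ (n+2) := my_lintegral_prod (n+2) f₀ hmf
    _ ≤ ENNReal.ofReal ((n:ℝ)+2) ^ (n+2) := pow_le_pow_left' (single_lintegral n) _
    _ = ENNReal.ofReal (((n:ℝ)+2)^(n+2)) := (ENNReal.ofReal_pow (by positivity) _).symm
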